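/- Quantized-state estimation error bound: let d ≠ 0 and 0 ≤ w < |d|, let o ∈ [0,1], and let X, V be independent real random variables with X square-integrable, P(X ∉ T(d, w)) ≤ o, and V centered Gaussian with variance σ² for some σ > 0. Then E[( X − Q_d(X + V) )²] ≤ E[( X − Q_d(X) )²] + Σ_{i=1}^{∞} ( i·|d| + w/2 )² · 2·Q( ((2i−1)·|d| − w)/(2σ) ) + o·( (3|d|/2)² + Σ_{i=2}^{∞} ( i·|d| + |d|/2 )² · 2·Q( ((i−1)·|d|)/σ ) ), where both series on the right-hand side converge. -/

import Mathlib

open MeasureTheory ProbabilityTheory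
open scoped ENNReal NNReal

/-- The comb lattice `T(d, w) = ⋃_{i ∈ ℤ} [i·d − w/2, i·d + w/2] ⊆ ℝ`. -/
def comb (d w : ℝ) : Set ℝ := ⋃ i : ℤ, Set.Icc (i * d - w / 2) (i * d + w / 2)

/-- Round-to-nearest quantization of `y` to the lattice `c·ℤ`. -/
noncomputable def quant (c y : ℝ) : ℝ := c * ⌊y / c + 1 / 2⌋

/-- The standard Gaussian tail function `Q(x) = (1/√(2π)) ∫_x^∞ exp(−u²/2) du`. -/
noncomputable def gaussQ (x : ℝ) : ℝ :=
  (Real.sqrt (2 * Real.pi))⁻¹ * ∫ u in Set.Ioi x, Real.exp (-u ^ 2 / 2)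

section helperlemmas

lemma quant_add_int_mul (c y : ℝ) (hc : c ≠ 0) (k : ℤ) :
    quant c (y + c * k) = quant c y + c * k := by
  unfold quant
  have : (y + c * k) / c + 1 / 2 = (y / c + 1 / 2) + k := by field_simp; ring
  rw [this, Int.floor_add_intCast]
  push_cast; ring

lemma abs_sub_quant_le (c y : ℝ) (hc : c ≠ 0) : |y - quant c y| ≤ |c| / 2 := by
  unfold quant
  have h1 : (⌊y / c + 1 / 2⌋ : ℝ) ≤ y / c + 1 / 2 := Int.floor_le _
  have h2 : y / c + 1 / 2 < ⌊y / c + 1 / 2⌋ + 1 := Int.lt_floor_add_one _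
  have hy : y - c * ⌊y / c + 1 / 2⌋ = c * (y / c - ⌊y / c + 1 / 2⌋) := by field_simp
  rw [hy, abs_mul]
  have : |y / c - (⌊y / c + 1 / 2⌋ : ℝ)| ≤ 1 / 2 := by
    rw [abs_le]; constructor <;> linarith
  calc |c| * |y / c - (⌊y / c + 1 / 2⌋ : ℝ)| ≤ |c| * (1 / 2) := by
        exact mul_le_mul_of_nonneg_left this (abs_nonneg c)
    _ = |c| / 2 := by ring

lemma quant_of_near (d x : ℝ) (i : ℤ) (hd : d ≠ 0) (hx : |x - i * d| < |d| / 2) :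
    quant d x = i * d := by
  unfold quant
  have hdpos : 0 < |d| := abs_pos.mpr hd
  have key : ⌊x / d + 1 / 2⌋ = i := by
    have h1 : |x / d - i| < 1 / 2 := by
      have : x / d - i = (x - i * d) / d := by field_simp
      rw [this, abs_div]
      rw [div_lt_iff₀ hdpos]
      calc |x - i * d| < |d| / 2 := hx
        _ = 1 / 2 * |d| := by ring
    rw [abs_lt] at h1
    have : (i : ℝ) < x / d + 1 / 2 := by linarith
    have h2 : x / d + 1 / 2 < i + 1 := by linarith
    rw [Int.floor_eq_iff]
    constructor
    · linarith
    · push_cast; linarith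
  rw [key]; ring

lemma abs_sub_quant_le_of_comb {d w x : ℝ} (hd : d ≠ 0) (hw0 : 0 ≤ w) (hw : w < |d|)
    (hx : x ∈ comb d w) : |x - quant d x| ≤ w / 2 := by
  obtain ⟨_, ⟨i, rfl⟩, hmem⟩ := hx
  simp only [Set.mem_Icc] at hmem
  have habs : |x - i * d| ≤ w / 2 := by rw [abs_le]; constructor <;> linarith
  have : quant d x = i * d := quant_of_near d x i hd (lt_of_le_of_lt habs (by linarith))
  rw [this]; exact habs

lemma integrable_gauss_kernel : Integrable (fun u : ℝ => Real.exp (-u ^ 2 / 2)) := by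
  have := integrable_exp_neg_mul_sq (b := (1:ℝ)/2) (by norm_num)
  convert this using 2 with u
  ring_nf

lemma gaussQ_nonneg (x : ℝ) : 0 ≤ gaussQ x := by
  apply mul_nonneg (inv_nonneg.mpr (Real.sqrt_nonneg _))
  exact setIntegral_nonneg measurableSet_Ioi (fun u _ => (Real.exp_pos _).le)

lemma gaussQ_le (x : ℝ) (hx : 0 ≤ x) : gaussQ x ≤ 2 * Real.exp (-x ^ 2 / 4) := by
  have hint4 : Integrable (fun u : ℝ => Real.exp (-u ^ 2 / 4)) := by
    have := integrable_exp_neg_mul_sq (b := (1:ℝ)/4) (by norm_num)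
    convert this using 2 with u
    ring_nf
  have h1 : (∫ u in Set.Ioi x, Real.exp (-u ^ 2 / 2)) ≤
      ∫ u in Set.Ioi x, Real.exp (-x ^ 2 / 4) * Real.exp (-u ^ 2 / 4) := by
    apply setIntegral_mono_on (integrable_gauss_kernel.restrict)
      ((hint4.restrict).const_mul _) measurableSet_Ioi
    intro u hu
    rw [Set.mem_Ioi] at hu
    rw [← Real.exp_add]
    apply Real.exp_le_exp.mpr
    nlinarith [sq_nonneg (u - x), sq_nonneg (u + x)]
  have h2 : (∫ u in Set.Ioi x, Real.exp (-x ^ 2 / 4) * Real.exp (-u ^ 2 / 4))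
      = Real.exp (-x ^ 2 / 4) * ∫ u in Set.Ioi x, Real.exp (-u ^ 2 / 4) := by
    rw [integral_const_mul]
  have h3 : (∫ u in Set.Ioi x, Real.exp (-u ^ 2 / 4)) ≤ ∫ u : ℝ, Real.exp (-u ^ 2 / 4) := by
    apply setIntegral_le_integral hint4
    filter_upwards with u using (Real.exp_pos _).le
  have h4 : (∫ u : ℝ, Real.exp (-u ^ 2 / 4)) = Real.sqrt (4 * Real.pi) := by
    have h := integral_gaussian ((1:ℝ)/4)
    have e : ∀ u : ℝ, Real.exp (-((1:ℝ)/4) * u ^ 2) = Real.exp (-u ^ 2 / 4) := by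
      intro u; ring_nf
    simp_rw [e] at h
    rw [h]
    congr 1
    ring
  have h2s : (2:ℝ) * Real.sqrt (2 * Real.pi) = Real.sqrt (4 * (2 * Real.pi)) := by
    rw [show (4:ℝ) * (2 * Real.pi) = (2 * Real.sqrt (2 * Real.pi)) ^ 2 by
        rw [mul_pow, Real.sq_sqrt (by positivity)]; ring,
      Real.sqrt_sq (by positivity)]
  have hsq : Real.sqrt (4 * Real.pi) ≤ 2 * Real.sqrt (2 * Real.pi) := by
    rw [h2s]
    apply Real.sqrt_le_sqrt
    nlinarith [Real.pi_pos]
  have hsp : 0 < Real.sqrt (2 * Real.pi) := Real.sqrt_pos.mpr (by positivity)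
  unfold gaussQ
  rw [inv_mul_le_iff₀ hsp]
  calc (∫ u in Set.Ioi x, Real.exp (-u ^ 2 / 2))
      ≤ Real.exp (-x ^ 2 / 4) * ∫ u in Set.Ioi x, Real.exp (-u ^ 2 / 4) := h1.trans h2.le
    _ ≤ Real.exp (-x ^ 2 / 4) * Real.sqrt (4 * Real.pi) := by
        exact mul_le_mul_of_nonneg_left (h3.trans h4.le) (Real.exp_pos _).le
    _ ≤ Real.exp (-x ^ 2 / 4) * (2 * Real.sqrt (2 * Real.pi)) := by
        exact mul_le_mul_of_nonneg_left hsq (Real.exp_pos _).le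
    _ = Real.sqrt (2 * Real.pi) * (2 * Real.exp (-x ^ 2 / 4)) := by ring

lemma summable_aux (a b c e : ℝ) (ha : 0 < a) (hb : 0 ≤ b) :
    Summable (fun i : ℕ => (c * (i : ℝ) + e) ^ 2 * (2 * gaussQ (a * i + b))) := by
  set r : ℝ := Real.exp (-a ^ 2 / 4) with hr
  have hr1 : r < 1 := by
    rw [hr, Real.exp_lt_one_iff]; nlinarith
  have hr0 : 0 < r := Real.exp_pos _
  have hbig : Summable (fun i : ℕ => ((|c| + |e|) ^ 2 * 4) * (((i:ℝ) + 1) ^ 2 * r ^ i)) := by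
    apply Summable.mul_left
    have hnr : ‖r‖ < 1 := by rwa [Real.norm_eq_abs, abs_of_pos hr0]
    have h2 : Summable (fun i : ℕ => ((i:ℝ)) ^ 2 * r ^ i) :=
      summable_pow_mul_geometric_of_norm_lt_one 2 hnr
    have h1 : Summable (fun i : ℕ => ((i:ℝ)) ^ 1 * r ^ i) :=
      summable_pow_mul_geometric_of_norm_lt_one 1 hnr
    have h0 : Summable (fun i : ℕ => r ^ i) := summable_geometric_of_lt_one hr0.le hr1
    have := (h2.add (h1.mul_left 2)).add h0
    convert this using 2 with i
    case e'_5 => ring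
    case e'_3 => rfl
  apply Summable.of_nonneg_of_le _ _ hbig
  · intro i
    apply mul_nonneg (sq_nonneg _)
    exact mul_nonneg (by norm_num) (gaussQ_nonneg _)
  · intro i
    have hin : (0:ℝ) ≤ (i:ℝ) := Nat.cast_nonneg i
    have hai : (0:ℝ) ≤ a * i + b := by positivity
    have hq : gaussQ (a * i + b) ≤ 2 * Real.exp (-(a * i + b) ^ 2 / 4) := gaussQ_le _ hai
    have hexp : Real.exp (-(a * i + b) ^ 2 / 4) ≤ r ^ i := by
      rw [hr, ← Real.exp_nat_mul]
      apply Real.exp_le_exp.mpr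
      have hii : (i:ℝ) ≤ (i:ℝ) ^ 2 := by
        rcases Nat.eq_zero_or_pos i with h | h
        · simp [h]
        · have h1 : (1:ℝ) ≤ (i:ℝ) := by exact_mod_cast h
          nlinarith
      nlinarith [mul_nonneg (mul_nonneg ha.le hin) hb, sq_nonneg b,
        mul_le_mul_of_nonneg_left hii (sq_nonneg a)]
    have habs : |c * (i:ℝ) + e| ≤ (|c| + |e|) * ((i:ℝ) + 1) := by
      calc |c * (i:ℝ) + e| ≤ |c * (i:ℝ)| + |e| := abs_add_le _ _
        _ = |c| * (i:ℝ) + |e| := by rw [abs_mul, Nat.abs_cast]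
        _ ≤ (|c| + |e|) * ((i:ℝ) + 1) := by nlinarith [abs_nonneg c, abs_nonneg e]
    have hc1 : (c * (i:ℝ) + e) ^ 2 ≤ ((|c| + |e|) * ((i:ℝ) + 1)) ^ 2 := by
      rw [← sq_abs (c * (i:ℝ) + e)]
      exact pow_le_pow_left₀ (abs_nonneg _) habs 2
    have hg2 : 2 * gaussQ (a * i + b) ≤ 2 * (2 * r ^ i) := by
      have : Real.exp (-(a * i + b) ^ 2 / 4) ≤ r ^ i := hexp
      nlinarith [gaussQ_nonneg (a * i + b)]
    calc (c * (i:ℝ) + e) ^ 2 * (2 * gaussQ (a * i + b))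
        ≤ ((|c| + |e|) * ((i:ℝ) + 1)) ^ 2 * (2 * (2 * r ^ i)) := by
          apply mul_le_mul hc1 hg2 (mul_nonneg (by norm_num) (gaussQ_nonneg _)) (sq_nonneg _)
      _ = ((|c| + |e|) ^ 2 * 4) * (((i:ℝ) + 1) ^ 2 * r ^ i) := by ring

lemma measurableSet_tail (t : ℝ) : MeasurableSet {x : ℝ | t ≤ |x|} := by
  have : {x : ℝ | t ≤ |x|} = (fun x : ℝ => |x|) ⁻¹' Set.Ici t := rfl
  rw [this]
  exact (continuous_abs.measurable) measurableSet_Ici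

lemma gaussian_tail (σ t : ℝ) (hσ : 0 < σ) :
    (gaussianReal 0 (Real.toNNReal (σ ^ 2))) {x | t ≤ |x|} ≤
      ENNReal.ofReal (2 * gaussQ (t / σ)) := by
  set v : ℝ≥0 := Real.toNNReal (σ ^ 2) with hv
  have hv0 : v ≠ 0 := by
    simp only [hv, ne_eq, Real.toNNReal_eq_zero, not_le]
    positivity
  have hvr : (v : ℝ) = σ ^ 2 := Real.coe_toNNReal _ (sq_nonneg σ)
  have hpdf : ∀ x : ℝ, gaussianPDFReal 0 v x
      = (Real.sqrt (2 * Real.pi))⁻¹ * σ⁻¹ * Real.exp (-(σ⁻¹ * x) ^ 2 / 2) := by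
    intro x
    unfold gaussianPDFReal
    rw [hvr]
    have h1 : Real.sqrt (2 * Real.pi * σ ^ 2) = Real.sqrt (2 * Real.pi) * σ := by
      rw [Real.sqrt_mul (by positivity), Real.sqrt_sq hσ.le]
    rw [h1, mul_inv]
    congr 1
    rw [sub_zero]
    congr 1
    field_simp
  have hIoi : ∀ s : ℝ, (∫ x in Set.Ioi s, gaussianPDFReal 0 v x) = gaussQ (s / σ) := by
    intro s
    simp_rw [hpdf]
    have := integral_comp_mul_left_Ioi
      (fun u => (Real.sqrt (2 * Real.pi))⁻¹ * σ⁻¹ * Real.exp (-u ^ 2 / 2)) s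
      (b := σ⁻¹) (by positivity)
    rw [this]
    rw [smul_eq_mul, inv_inv]
    rw [integral_const_mul, show σ⁻¹ * s = s / σ by ring]
    unfold gaussQ
    field_simp
  have hIci : (gaussianReal 0 v) (Set.Ici t) = ENNReal.ofReal (gaussQ (t / σ)) := by
    rw [gaussianReal_apply_eq_integral 0 hv0]
    rw [MeasureTheory.integral_Ici_eq_integral_Ioi, hIoi]
  have heven : ∀ x : ℝ, gaussianPDFReal 0 v (-x) = gaussianPDFReal 0 v x := by
    intro x; unfold gaussianPDFReal; ring_nf
  have hIic : (gaussianReal 0 v) (Set.Iic (-t)) = ENNReal.ofReal (gaussQ (t / σ)) := by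
    rw [gaussianReal_apply_eq_integral 0 hv0]
    have := integral_comp_neg_Iic (-t) (fun x => gaussianPDFReal 0 v x)
    simp_rw [heven] at this
    rw [this, neg_neg, hIoi]
  have hsub : {x : ℝ | t ≤ |x|} ⊆ Set.Iic (-t) ∪ Set.Ici t := by
    intro x hx
    simp only [Set.mem_setOf_eq] at hx
    rcases abs_cases x with ⟨h1, _⟩ | ⟨h1, _⟩
    · right; rw [Set.mem_Ici]; linarith
    · left; rw [Set.mem_Iic]; linarith
  calc (gaussianReal 0 v) {x | t ≤ |x|} ≤ (gaussianReal 0 v) (Set.Iic (-t) ∪ Set.Ici t) :=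
        measure_mono hsub
    _ ≤ (gaussianReal 0 v) (Set.Iic (-t)) + (gaussianReal 0 v) (Set.Ici t) :=
        measure_union_le _ _
    _ = ENNReal.ofReal (gaussQ (t / σ)) + ENNReal.ofReal (gaussQ (t / σ)) := by
        rw [hIic, hIci]
    _ = ENNReal.ofReal (2 * gaussQ (t / σ)) := by
        rw [← ENNReal.ofReal_add (gaussQ_nonneg _) (gaussQ_nonneg _)]
        congr 1
        ring

end helperlemmas

/-- Quantized-state estimation error bound: if `d ≠ 0`,
`0 ≤ w < |d|`, `o ∈ [0,1]`, and `X, V` are independent with `X` square-integrable,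
`P(X ∉ T(d, w)) ≤ o`, and `V ~ N(0, σ²)` with `σ > 0`, then
`E[(X − Q_d(X+V))²] ≤ E[(X − Q_d(X))²]
  + Σ_{i=1}^∞ (i|d| + w/2)²·2Q(((2i−1)|d| − w)/(2σ))
  + o·((3|d|/2)² + Σ_{i=2}^∞ (i|d| + |d|/2)²·2Q(((i−1)|d|)/σ))`,
and both series converge. -/
theorem statement11 (Ω : Type) [MeasurableSpace Ω] (μ : Measure Ω) [IsProbabilityMeasure μ]
    (X V : Ω → ℝ) (d w o σ : ℝ) (hd : d ≠ 0) (hw0 : 0 ≤ w) (hw : w < |d|)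
    (ho0 : 0 ≤ o) (ho1 : o ≤ 1) (hσ : 0 < σ)
    (hindep : IndepFun X V μ) (hX : MeasureTheory.MemLp X 2 μ) (hmV : Measurable V)
    (hcomb : μ {ω | X ω ∉ comb d w} ≤ ENNReal.ofReal o)
    (hV : Measure.map V μ = gaussianReal 0 (Real.toNNReal (σ ^ 2))) :
    Summable (fun i : ℕ =>
      (((i : ℝ) + 1) * |d| + w / 2) ^ 2 *
        (2 * gaussQ (((2 * ((i : ℝ) + 1) - 1) * |d| - w) / (2 * σ)))) ∧
    Summable (fun i : ℕ =>
      (((i : ℝ) + 2) * |d| + |d| / 2) ^ 2 * (2 * gaussQ ((((i : ℝ) + 1) * |d|) / σ))) ∧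
    ∫ ω, (X ω - quant d (X ω + V ω)) ^ 2 ∂μ ≤
      (∫ ω, (X ω - quant d (X ω)) ^ 2 ∂μ) +
        (∑' i : ℕ, (((i : ℝ) + 1) * |d| + w / 2) ^ 2 *
          (2 * gaussQ (((2 * ((i : ℝ) + 1) - 1) * |d| - w) / (2 * σ)))) +
        o * ((3 * |d| / 2) ^ 2 +
          ∑' i : ℕ, (((i : ℝ) + 2) * |d| + |d| / 2) ^ 2 *
            (2 * gaussQ ((((i : ℝ) + 1) * |d|) / σ))) := by
  have hdpos : (0:ℝ) < |d| := abs_pos.mpr hd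
  -- summability of the two series
  have hS1 : Summable (fun i : ℕ =>
      (((i : ℝ) + 1) * |d| + w / 2) ^ 2 *
        (2 * gaussQ (((2 * ((i : ℝ) + 1) - 1) * |d| - w) / (2 * σ)))) := by
    apply (summable_aux (|d| / σ) ((|d| - w) / (2 * σ)) |d| (|d| + w / 2)
      (by positivity) (div_nonneg (by linarith) (by positivity))).congr
    intro i
    congr 1
    · ring
    · congr 2
      field_simp
      ring
  have hS2 : Summable (fun i : ℕ =>
      (((i : ℝ) + 2) * |d| + |d| / 2) ^ 2 * (2 * gaussQ ((((i : ℝ) + 1) * |d|) / σ))) := by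
    apply (summable_aux (|d| / σ) (|d| / σ) |d| (2 * |d| + |d| / 2)
      (by positivity) (by positivity)).congr
    intro i
    congr 1
    · ring
    · congr 2
      field_simp
  refine ⟨hS1, hS2, ?_⟩
  -- measurable representative of X
  obtain ⟨hXm, -⟩ := hX
  set X' : Ω → ℝ := hXm.mk X with hX'def
  have hmX : Measurable X' := hXm.stronglyMeasurable_mk.measurable
  have hXX' : X =ᵐ[μ] X' := hXm.ae_eq_mk
  have hindep' : IndepFun X' V μ := hindep.congr hXX' (Filter.EventuallyEq.refl _ _)
  have hcombMeas : MeasurableSet (comb d w) :=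
    MeasurableSet.iUnion (fun i => measurableSet_Icc)
  have hcomb' : μ {ω | X' ω ∉ comb d w} ≤ ENNReal.ofReal o := by
    have hset : {ω | X' ω ∉ comb d w} =ᵐ[μ] {ω | X ω ∉ comb d w} := by
      filter_upwards [hXX'] with ω h
      change (X' ω ∉ comb d w) = (X ω ∉ comb d w)
      rw [h]
    rw [measure_congr hset]
    exact hcomb
  have hint1 : ∫ ω, (X ω - quant d (X ω + V ω)) ^ 2 ∂μ
      = ∫ ω, (X' ω - quant d (X' ω + V ω)) ^ 2 ∂μ :=
    integral_congr_ae (by filter_upwards [hXX'] with ω h; rw [h])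
  have hint2 : ∫ ω, (X ω - quant d (X ω)) ^ 2 ∂μ
      = ∫ ω, (X' ω - quant d (X' ω)) ^ 2 ∂μ :=
    integral_congr_ae (by filter_upwards [hXX'] with ω h; rw [h])
  rw [hint1, hint2]
  -- residual and quantization index
  set R : Ω → ℝ := fun ω => X' ω - quant d (X' ω) with hRdef
  set j : Ω → ℤ := fun ω => ⌊(R ω + V ω) / d + 1 / 2⌋ with hjdef
  have hmR : Measurable R := by
    apply hmX.sub
    apply Measurable.const_mul
    exact measurable_from_top.comp (((hmX.div_const d).add_const (1 / 2)).floor)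
  have hmj : Measurable j := ((hmR.add hmV).div_const d).add_const (1 / 2) |>.floor
  have hkey : ∀ ω, X' ω - quant d (X' ω + V ω) = R ω - d * j ω := by
    intro ω
    have h1 : X' ω + V ω = (R ω + V ω) + d * (⌊X' ω / d + 1 / 2⌋ : ℤ) := by
      simp only [hRdef, quant]
      ring
    rw [h1, quant_add_int_mul d _ hd]
    have h2 : quant d (R ω + V ω) = d * j ω := rfl
    rw [h2]
    simp only [hRdef, quant]
    ring
  have hRb : ∀ ω, |R ω| ≤ |d| / 2 := fun ω => abs_sub_quant_le d (X' ω) hd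
  have hRcomb : ∀ ω, X' ω ∈ comb d w → |R ω| ≤ w / 2 :=
    fun ω h => abs_sub_quant_le_of_comb hd hw0 hw h
  have hVb : ∀ ω, |d| * (j ω).natAbs - |d| / 2 - |R ω| ≤ |V ω| := by
    intro ω
    have h1 : |R ω + V ω - quant d (R ω + V ω)| ≤ |d| / 2 := abs_sub_quant_le d _ hd
    have h2 : quant d (R ω + V ω) = d * j ω := rfl
    rw [h2] at h1
    have h3 : |d * j ω - R ω| ≤ |V ω| + |R ω + V ω - d * j ω| := by
      have := abs_sub (V ω) (R ω + V ω - d * j ω)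
      calc |d * j ω - R ω| = |V ω - (R ω + V ω - d * j ω)| := by ring_nf
        _ ≤ |V ω| + |R ω + V ω - d * j ω| := abs_sub _ _
    have h4 : |d * (j ω : ℝ)| - |R ω| ≤ |d * j ω - R ω| := abs_sub_abs_le_abs_sub _ _
    have h5 : |d * (j ω : ℝ)| = |d| * (j ω).natAbs := by
      rw [abs_mul]
      congr 1
      rw [Nat.cast_natAbs]
      push_cast
      rfl
    rw [h5] at h4
    linarith
  -- the decomposition sets
  set A1 : ℕ → Set Ω := fun i => {ω | X' ω ∈ comb d w ∧ (j ω).natAbs = i + 1} with hA1def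
  set A2 : Set Ω := {ω | X' ω ∉ comb d w ∧ (j ω).natAbs = 1} with hA2def
  set A3 : ℕ → Set Ω := fun i => {ω | X' ω ∉ comb d w ∧ (j ω).natAbs = i + 2} with hA3def
  have hmsets : ∀ (s : Set ℤ), MeasurableSet (j ⁻¹' s) :=
    fun s => hmj MeasurableSpace.measurableSet_top
  have hmA1 : ∀ i, MeasurableSet (A1 i) := by
    intro i
    exact (hmX hcombMeas).inter (hmsets {k : ℤ | k.natAbs = i + 1})
  have hmA2 : MeasurableSet A2 :=
    (hmX hcombMeas.compl).inter (hmsets {k : ℤ | k.natAbs = 1})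
  have hmA3 : ∀ i, MeasurableSet (A3 i) := by
    intro i
    exact (hmX hcombMeas.compl).inter (hmsets {k : ℤ | k.natAbs = i + 2})
  -- the pointwise bound
  have sq_bound : ∀ (ω : Ω) (r : ℝ), |R ω| ≤ r →
      (R ω - d * j ω) ^ 2 ≤ ((j ω).natAbs * |d| + r) ^ 2 := by
    intro ω r hr
    have h5 : |d * (j ω : ℝ)| = |d| * (j ω).natAbs := by
      rw [abs_mul]
      congr 1
      rw [Nat.cast_natAbs]
      push_cast
      rfl
    have habs : |R ω - d * j ω| ≤ (j ω).natAbs * |d| + r := by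
      calc |R ω - d * j ω| ≤ |R ω| + |d * (j ω : ℝ)| := abs_sub _ _
        _ = |R ω| + |d| * (j ω).natAbs := by rw [h5]
        _ ≤ (j ω).natAbs * |d| + r := by linarith
    calc (R ω - d * j ω) ^ 2 = |R ω - d * j ω| ^ 2 := (sq_abs _).symm
      _ ≤ ((j ω).natAbs * |d| + r) ^ 2 := by
          apply pow_le_pow_left₀ (abs_nonneg _) habs
  have hpt : ∀ ω, ENNReal.ofReal ((R ω - d * j ω) ^ 2) ≤
      ENNReal.ofReal ((R ω) ^ 2)
        + (∑' i : ℕ, Set.indicator (A1 i)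
            (fun _ => ENNReal.ofReal ((((i:ℝ) + 1) * |d| + w / 2) ^ 2)) ω)
        + Set.indicator A2 (fun _ => ENNReal.ofReal ((3 * |d| / 2) ^ 2)) ω
        + (∑' i : ℕ, Set.indicator (A3 i)
            (fun _ => ENNReal.ofReal ((((i:ℝ) + 2) * |d| + |d| / 2) ^ 2)) ω) := by
    intro ω
    rcases Nat.eq_zero_or_pos (j ω).natAbs with hm | hm
    · -- j ω = 0
      have hj0 : (j ω : ℝ) = 0 := by exact_mod_cast Int.natAbs_eq_zero.mp hm
      have : (R ω - d * j ω) ^ 2 = (R ω) ^ 2 := by rw [hj0]; ring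
      rw [this]
      exact le_add_right (le_add_right (le_add_right le_rfl))
    · by_cases hc : X' ω ∈ comb d w
      · -- comb case, m ≥ 1, use A1 (m - 1)
        set m := (j ω).natAbs with hmdef
        have hmem : ω ∈ A1 (m - 1) := by
          refine ⟨hc, ?_⟩
          show (j ω).natAbs = m - 1 + 1
          omega
        have hcast : (((m - 1 : ℕ):ℝ) + 1) = (m:ℝ) := by
          push_cast [Nat.cast_sub (by omega : 1 ≤ m)]
          ring
        have hval : ENNReal.ofReal ((R ω - d * j ω) ^ 2) ≤
            Set.indicator (A1 (m - 1))
              (fun _ => ENNReal.ofReal (((((m - 1 : ℕ):ℝ) + 1) * |d| + w / 2) ^ 2)) ω := by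
          rw [Set.indicator_of_mem hmem]
          apply ENNReal.ofReal_le_ofReal
          rw [hcast]
          exact sq_bound ω (w / 2) (hRcomb ω hc)
        calc ENNReal.ofReal ((R ω - d * j ω) ^ 2)
            ≤ Set.indicator (A1 (m - 1))
              (fun _ => ENNReal.ofReal (((((m - 1 : ℕ):ℝ) + 1) * |d| + w / 2) ^ 2)) ω := hval
          _ ≤ ∑' i : ℕ, Set.indicator (A1 i)
              (fun _ => ENNReal.ofReal ((((i:ℝ) + 1) * |d| + w / 2) ^ 2)) ω :=
            ENNReal.le_tsum (m - 1)
          _ ≤ _ := le_add_right (le_add_right le_add_self)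
      · rcases Nat.lt_or_ge (j ω).natAbs 2 with hm2 | hm2
        · -- m = 1
          have hm1 : (j ω).natAbs = 1 := by omega
          have hmem : ω ∈ A2 := ⟨hc, hm1⟩
          have hval : ENNReal.ofReal ((R ω - d * j ω) ^ 2) ≤
              Set.indicator A2 (fun _ => ENNReal.ofReal ((3 * |d| / 2) ^ 2)) ω := by
            rw [Set.indicator_of_mem hmem]
            apply ENNReal.ofReal_le_ofReal
            have := sq_bound ω (|d| / 2) (hRb ω)
            rw [hm1] at this
            calc (R ω - d * j ω) ^ 2 ≤ ((1:ℕ) * |d| + |d| / 2) ^ 2 := this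
              _ = (3 * |d| / 2) ^ 2 := by push_cast; ring
          calc ENNReal.ofReal ((R ω - d * j ω) ^ 2)
              ≤ Set.indicator A2 (fun _ => ENNReal.ofReal ((3 * |d| / 2) ^ 2)) ω := hval
            _ ≤ _ := le_add_right le_add_self
        · -- m ≥ 2
          set m := (j ω).natAbs with hmdef
          have hmem : ω ∈ A3 (m - 2) := by
            refine ⟨hc, ?_⟩
            show (j ω).natAbs = m - 2 + 2
            omega
          have hcast : (((m - 2 : ℕ):ℝ) + 2) = (m:ℝ) := by
            push_cast [Nat.cast_sub (by omega : 2 ≤ m)]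
            ring
          have hval : ENNReal.ofReal ((R ω - d * j ω) ^ 2) ≤
              Set.indicator (A3 (m - 2))
                (fun _ => ENNReal.ofReal (((((m - 2 : ℕ):ℝ) + 2) * |d| + |d| / 2) ^ 2)) ω := by
            rw [Set.indicator_of_mem hmem]
            apply ENNReal.ofReal_le_ofReal
            rw [hcast]
            exact sq_bound ω (|d| / 2) (hRb ω)
          calc ENNReal.ofReal ((R ω - d * j ω) ^ 2)
              ≤ Set.indicator (A3 (m - 2))
                (fun _ => ENNReal.ofReal (((((m - 2 : ℕ):ℝ) + 2) * |d| + |d| / 2) ^ 2)) ω := hval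
            _ ≤ ∑' i : ℕ, Set.indicator (A3 i)
                (fun _ => ENNReal.ofReal ((((i:ℝ) + 2) * |d| + |d| / 2) ^ 2)) ω :=
              ENNReal.le_tsum (m - 2)
            _ ≤ _ := le_add_self
  -- measurability of the pieces
  have hmcast : Measurable fun ω => ((j ω : ℤ) : ℝ) := measurable_from_top.comp hmj
  have hmE : Measurable fun ω => (R ω - d * j ω) ^ 2 :=
    (hmR.sub (measurable_const.mul hmcast)).pow_const 2
  have hmf0 : Measurable fun ω => ENNReal.ofReal ((R ω) ^ 2) :=
    (hmR.pow_const 2).ennreal_ofReal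
  have hmf1 : Measurable fun ω => ∑' i : ℕ, Set.indicator (A1 i)
      (fun _ => ENNReal.ofReal ((((i:ℝ) + 1) * |d| + w / 2) ^ 2)) ω :=
    Measurable.ennreal_tsum (fun i => measurable_const.indicator (hmA1 i))
  have hmf2 : Measurable fun ω =>
      Set.indicator A2 (fun _ => ENNReal.ofReal ((3 * |d| / 2) ^ 2)) ω :=
    measurable_const.indicator hmA2
  have hmf3 : Measurable fun ω => ∑' i : ℕ, Set.indicator (A3 i)
      (fun _ => ENNReal.ofReal ((((i:ℝ) + 2) * |d| + |d| / 2) ^ 2)) ω :=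
    Measurable.ennreal_tsum (fun i => measurable_const.indicator (hmA3 i))
  -- the tail bound for V
  have hVtail : ∀ t : ℝ, μ {ω | t ≤ |V ω|} ≤ ENNReal.ofReal (2 * gaussQ (t / σ)) := by
    intro t
    have h1 : {ω | t ≤ |V ω|} = V ⁻¹' {x | t ≤ |x|} := rfl
    rw [h1, ← Measure.map_apply hmV (measurableSet_tail t), hV]
    exact gaussian_tail σ t hσ
  -- the four lintegral bounds
  have hIntR : Integrable (fun ω => (R ω) ^ 2) μ := by
    apply Integrable.mono' (integrable_const ((|d| / 2) ^ 2))
      ((hmR.pow_const 2).aestronglyMeasurable)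
    filter_upwards with ω
    rw [Real.norm_eq_abs, abs_of_nonneg (sq_nonneg _)]
    calc (R ω) ^ 2 = |R ω| ^ 2 := (sq_abs _).symm
      _ ≤ (|d| / 2) ^ 2 := pow_le_pow_left₀ (abs_nonneg _) (hRb ω) 2
  have T0 : ∫⁻ ω, ENNReal.ofReal ((R ω) ^ 2) ∂μ
      = ENNReal.ofReal (∫ ω, (R ω) ^ 2 ∂μ) :=
    (ofReal_integral_eq_lintegral_ofReal hIntR (ae_of_all _ fun ω => sq_nonneg _)).symm
  have T1 : ∫⁻ ω, (∑' i : ℕ, Set.indicator (A1 i)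
        (fun _ => ENNReal.ofReal ((((i:ℝ) + 1) * |d| + w / 2) ^ 2)) ω) ∂μ
      ≤ ENNReal.ofReal (∑' i : ℕ, (((i:ℝ) + 1) * |d| + w / 2) ^ 2 *
          (2 * gaussQ (((2 * ((i:ℝ) + 1) - 1) * |d| - w) / (2 * σ)))) := by
    rw [lintegral_tsum (fun i => (measurable_const.indicator (hmA1 i)).aemeasurable)]
    rw [ENNReal.ofReal_tsum_of_nonneg (fun i => mul_nonneg (sq_nonneg _)
      (mul_nonneg (by norm_num) (gaussQ_nonneg _))) hS1]
    apply ENNReal.tsum_le_tsum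
    intro i
    rw [lintegral_indicator_const (hmA1 i)]
    have hsub : A1 i ⊆ {ω | ((2 * ((i:ℝ) + 1) - 1) * |d| - w) / 2 ≤ |V ω|} := by
      rintro ω ⟨hcω, hjω⟩
      have h1 := hVb ω
      rw [hjω] at h1
      have h2 := hRcomb ω hcω
      simp only [Set.mem_setOf_eq]
      push_cast at h1
      linarith
    calc ENNReal.ofReal ((((i:ℝ) + 1) * |d| + w / 2) ^ 2) * μ (A1 i)
        ≤ ENNReal.ofReal ((((i:ℝ) + 1) * |d| + w / 2) ^ 2) *
            ENNReal.ofReal (2 * gaussQ ((((2 * ((i:ℝ) + 1) - 1) * |d| - w) / 2) / σ)) := by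
          apply mul_le_mul_right ((measure_mono hsub).trans (hVtail _))
      _ = ENNReal.ofReal ((((i:ℝ) + 1) * |d| + w / 2) ^ 2 *
            (2 * gaussQ (((2 * ((i:ℝ) + 1) - 1) * |d| - w) / (2 * σ)))) := by
          rw [← ENNReal.ofReal_mul (sq_nonneg _)]
          congr 3
          field_simp
  have T2 : ∫⁻ ω, Set.indicator A2 (fun _ => ENNReal.ofReal ((3 * |d| / 2) ^ 2)) ω ∂μ
      ≤ ENNReal.ofReal ((3 * |d| / 2) ^ 2 * o) := by
    rw [lintegral_indicator_const hmA2]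
    calc ENNReal.ofReal ((3 * |d| / 2) ^ 2) * μ A2
        ≤ ENNReal.ofReal ((3 * |d| / 2) ^ 2) * ENNReal.ofReal o := by
          apply mul_le_mul_right
          exact (measure_mono (fun ω h => h.1)).trans hcomb'
      _ = ENNReal.ofReal ((3 * |d| / 2) ^ 2 * o) := by
          rw [← ENNReal.ofReal_mul (sq_nonneg _)]
  have T3 : ∫⁻ ω, (∑' i : ℕ, Set.indicator (A3 i)
        (fun _ => ENNReal.ofReal ((((i:ℝ) + 2) * |d| + |d| / 2) ^ 2)) ω) ∂μ
      ≤ ENNReal.ofReal (o * ∑' i : ℕ, (((i:ℝ) + 2) * |d| + |d| / 2) ^ 2 *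
          (2 * gaussQ ((((i:ℝ) + 1) * |d|) / σ))) := by
    rw [lintegral_tsum (fun i => (measurable_const.indicator (hmA3 i)).aemeasurable)]
    rw [← tsum_mul_left, ENNReal.ofReal_tsum_of_nonneg (fun i => mul_nonneg ho0
      (mul_nonneg (sq_nonneg _) (mul_nonneg (by norm_num) (gaussQ_nonneg _))))
      (hS2.mul_left o)]
    apply ENNReal.tsum_le_tsum
    intro i
    rw [lintegral_indicator_const (hmA3 i)]
    have hsub : A3 i ⊆ {ω | X' ω ∉ comb d w} ∩ {ω | ((i:ℝ) + 1) * |d| ≤ |V ω|} := by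
      rintro ω ⟨hcω, hjω⟩
      refine ⟨hcω, ?_⟩
      have h1 := hVb ω
      rw [hjω] at h1
      have h2 := hRb ω
      simp only [Set.mem_setOf_eq]
      push_cast at h1
      linarith
    have hprod : μ ({ω | X' ω ∉ comb d w} ∩ {ω | ((i:ℝ) + 1) * |d| ≤ |V ω|})
        = μ {ω | X' ω ∉ comb d w} * μ {ω | ((i:ℝ) + 1) * |d| ≤ |V ω|} := by
      have e1 : {ω | X' ω ∉ comb d w} = X' ⁻¹' (comb d w)ᶜ := rfl
      have e2 : {ω | ((i:ℝ) + 1) * |d| ≤ |V ω|} = V ⁻¹' {x | ((i:ℝ) + 1) * |d| ≤ |x|} := rfl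
      rw [e1, e2]
      exact hindep'.measure_inter_preimage_eq_mul _ _ hcombMeas.compl (measurableSet_tail _)
    calc ENNReal.ofReal ((((i:ℝ) + 2) * |d| + |d| / 2) ^ 2) * μ (A3 i)
        ≤ ENNReal.ofReal ((((i:ℝ) + 2) * |d| + |d| / 2) ^ 2) *
            (ENNReal.ofReal o * ENNReal.ofReal (2 * gaussQ ((((i:ℝ) + 1) * |d|) / σ))) := by
          apply mul_le_mul_right
          calc μ (A3 i) ≤ μ ({ω | X' ω ∉ comb d w} ∩ {ω | ((i:ℝ) + 1) * |d| ≤ |V ω|}) :=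
                measure_mono hsub
            _ = μ {ω | X' ω ∉ comb d w} * μ {ω | ((i:ℝ) + 1) * |d| ≤ |V ω|} := hprod
            _ ≤ ENNReal.ofReal o * ENNReal.ofReal (2 * gaussQ ((((i:ℝ) + 1) * |d|) / σ)) :=
                mul_le_mul' hcomb' (hVtail _)
      _ = ENNReal.ofReal (o * ((((i:ℝ) + 2) * |d| + |d| / 2) ^ 2 *
            (2 * gaussQ ((((i:ℝ) + 1) * |d|) / σ)))) := by
          rw [← ENNReal.ofReal_mul ho0, ← ENNReal.ofReal_mul (sq_nonneg _)]
          congr 1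
          ring
  -- names for the real quantities
  set IR : ℝ := ∫ ω, (R ω) ^ 2 ∂μ with hIRdef
  set S1 : ℝ := ∑' i : ℕ, (((i:ℝ) + 1) * |d| + w / 2) ^ 2 *
      (2 * gaussQ (((2 * ((i:ℝ) + 1) - 1) * |d| - w) / (2 * σ))) with hS1def
  set S2 : ℝ := ∑' i : ℕ, (((i:ℝ) + 2) * |d| + |d| / 2) ^ 2 *
      (2 * gaussQ ((((i:ℝ) + 1) * |d|) / σ)) with hS2def
  have hIR0 : 0 ≤ IR := integral_nonneg (fun ω => sq_nonneg _)
  have hS10 : 0 ≤ S1 := tsum_nonneg (fun i => mul_nonneg (sq_nonneg _)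
    (mul_nonneg (by norm_num) (gaussQ_nonneg _)))
  have hS20 : 0 ≤ S2 := tsum_nonneg (fun i => mul_nonneg (sq_nonneg _)
    (mul_nonneg (by norm_num) (gaussQ_nonneg _)))
  -- the total lintegral bound
  have hmain : ∫⁻ ω, ENNReal.ofReal ((R ω - d * j ω) ^ 2) ∂μ
      ≤ ENNReal.ofReal (IR + S1 + ((3 * |d| / 2) ^ 2 * o + o * S2)) := by
    calc ∫⁻ ω, ENNReal.ofReal ((R ω - d * j ω) ^ 2) ∂μ
        ≤ ∫⁻ ω, (ENNReal.ofReal ((R ω) ^ 2)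
            + (∑' i : ℕ, Set.indicator (A1 i)
                (fun _ => ENNReal.ofReal ((((i:ℝ) + 1) * |d| + w / 2) ^ 2)) ω)
            + Set.indicator A2 (fun _ => ENNReal.ofReal ((3 * |d| / 2) ^ 2)) ω
            + (∑' i : ℕ, Set.indicator (A3 i)
                (fun _ => ENNReal.ofReal ((((i:ℝ) + 2) * |d| + |d| / 2) ^ 2)) ω)) ∂μ :=
          lintegral_mono hpt
      _ = (∫⁻ ω, ENNReal.ofReal ((R ω) ^ 2) ∂μ)
            + (∫⁻ ω, (∑' i : ℕ, Set.indicator (A1 i)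
                (fun _ => ENNReal.ofReal ((((i:ℝ) + 1) * |d| + w / 2) ^ 2)) ω) ∂μ)
            + (∫⁻ ω, Set.indicator A2 (fun _ => ENNReal.ofReal ((3 * |d| / 2) ^ 2)) ω ∂μ)
            + (∫⁻ ω, (∑' i : ℕ, Set.indicator (A3 i)
                (fun _ => ENNReal.ofReal ((((i:ℝ) + 2) * |d| + |d| / 2) ^ 2)) ω) ∂μ) := by
          rw [lintegral_add_left ((hmf0.fun_add hmf1).fun_add hmf2),
            lintegral_add_left (hmf0.fun_add hmf1), lintegral_add_left hmf0]
      _ ≤ ENNReal.ofReal IR + ENNReal.ofReal S1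
            + ENNReal.ofReal ((3 * |d| / 2) ^ 2 * o) + ENNReal.ofReal (o * S2) := by
          rw [T0]
          exact add_le_add (add_le_add (add_le_add le_rfl T1) T2) T3
      _ = ENNReal.ofReal (IR + S1 + ((3 * |d| / 2) ^ 2 * o + o * S2)) := by
          rw [← ENNReal.ofReal_add hIR0 hS10,
            ← ENNReal.ofReal_add (by positivity) (mul_nonneg (sq_nonneg _) ho0),
            ← ENNReal.ofReal_add (by positivity) (mul_nonneg ho0 hS20)]
          congr 1
          ring
  -- convert to the real integral
  have hlhs : ∫ ω, (X' ω - quant d (X' ω + V ω)) ^ 2 ∂μ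
      = (∫⁻ ω, ENNReal.ofReal ((R ω - d * j ω) ^ 2) ∂μ).toReal := by
    have he : ∫ ω, (X' ω - quant d (X' ω + V ω)) ^ 2 ∂μ
        = ∫ ω, (R ω - d * j ω) ^ 2 ∂μ :=
      integral_congr_ae (ae_of_all _ fun ω => congrArg (fun t => t ^ 2) (hkey ω))
    rw [he, integral_eq_lintegral_of_nonneg_ae (ae_of_all _ fun ω => sq_nonneg _)
      hmE.aestronglyMeasurable]
  have hfinal : ∫ ω, (X' ω - quant d (X' ω + V ω)) ^ 2 ∂μ
      ≤ IR + S1 + ((3 * |d| / 2) ^ 2 * o + o * S2) := by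
    rw [hlhs]
    calc (∫⁻ ω, ENNReal.ofReal ((R ω - d * j ω) ^ 2) ∂μ).toReal
        ≤ (ENNReal.ofReal (IR + S1 + ((3 * |d| / 2) ^ 2 * o + o * S2))).toReal :=
          ENNReal.toReal_mono ENNReal.ofReal_ne_top hmain
      _ = IR + S1 + ((3 * |d| / 2) ^ 2 * o + o * S2) := by
          rw [ENNReal.toReal_ofReal]
          positivity

  calc ∫ ω, (X' ω - quant d (X' ω + V ω)) ^ 2 ∂μ
      ≤ IR + S1 + ((3 * |d| / 2) ^ 2 * o + o * S2) := hfinal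
    _ = IR + S1 + o * ((3 * |d| / 2) ^ 2 + S2) := by ring
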